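/- Equivalence of the information nonanticipative RDF and the nonanticipatory ε-entropy (Theorem 4): fix a probability measure P on ∏_{i=0}^n 𝒳_i (the source law), a measurable distortion function d : (∏𝒳_i) × (∏𝒴_i) → [0,∞], and D ≥ 0. For a joint probability measure μ on (∏𝒳_i) × (∏𝒴_i) with coordinate processes X^n, Y^n, write I(μ) for the Kullback–Leibler divergence of μ from the product of its two marginals (the mutual information I(X^n; Y^n)). Let 𝒬na(D) be the set of joint measures μ such that the ∏𝒳_i-marginal of μ equals P, ∫ d dμ ≤ (n+1)D, and for every i = 0,…,n−1, Y_i is conditionally independent of (X_{i+1},…,X_n) given (X_0,…,X_i, Y_0,…,Y_{i−1}) under μ. Let 𝒬ε(D) be the set of joint measures μ with the same marginal and distortion constraints such that for every i = 0,…,n−1, (X_{i+1},…,X_n) is conditionally independent of (Y_0,…,Y_i) given (X_0,…,X_i) under μ. Then 𝒬na(D) = 𝒬ε(D), and consequently the infimum of I(μ) over 𝒬na(D) equals the infimum of I(μ) over 𝒬ε(D); that is, R^{na}_{0,n}(D) = R^{ε}_{0,n}(D). -/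

import Mathlib

open MeasureTheory ProbabilityTheory
open scoped NNReal ENNReal Classical

open MeasurableSpace
set_option linter.unusedSectionVars false


namespace RDFAux

variable {Ω : Type*} {mΩ : MeasurableSpace Ω} [StandardBorelSpace Ω]
  {μ : Measure Ω} [IsProbabilityMeasure μ]

lemma indicator_one_mul (s : Set Ω) (f : Ω → ℝ) :
    s.indicator f = fun x => s.indicator (fun _ => (1:ℝ)) x * f x := by
  funext x
  by_cases hx : x ∈ s <;> simp [Set.indicator_of_mem, Set.indicator_of_notMem, hx]

lemma integrable_indicator_one {s : Set Ω} (hs : MeasurableSet s) :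
    Integrable (s.indicator fun _ => (1:ℝ)) μ :=
  (integrable_const 1).indicator hs

lemma norm_indicator_one_le (s : Set Ω) : ∀ᵐ x ∂μ, ‖s.indicator (fun _ => (1:ℝ)) x‖ ≤ 1 := by
  refine Filter.Eventually.of_forall fun x => ?_
  by_cases hx : x ∈ s <;> simp [Set.indicator_of_mem, Set.indicator_of_notMem, hx]

lemma condexp_sandwich {m' mMid mBig : MeasurableSpace Ω} (h1 : m' ≤ mMid) (h2 : mMid ≤ mBig)
    (h3 : mBig ≤ mΩ) {f : Ω → ℝ}
    (h : μ[f|mBig] =ᵐ[μ] μ[f|m']) : μ[f|mMid] =ᵐ[μ] μ[f|m'] := by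
  have t1 : μ[f|mMid] =ᵐ[μ] μ[(μ[f|mBig])|mMid] := (condExp_condExp_of_le h2 h3).symm
  have t2 : μ[(μ[f|mBig])|mMid] =ᵐ[μ] μ[(μ[f|m'])|mMid] := condExp_congr_ae h
  have t3 : μ[(μ[f|m'])|mMid] = μ[f|m'] :=
    condExp_of_stronglyMeasurable (h2.trans h3)
      (stronglyMeasurable_condExp.mono h1) integrable_condExp
  exact t1.trans (t2.trans (by rw [t3]))

end RDFAux

namespace RDFAux

variable {Ω : Type*} {mΩ : MeasurableSpace Ω} [StandardBorelSpace Ω]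
  {μ : Measure Ω} [IsProbabilityMeasure μ]

lemma condIndep_iff_condexp_sup_eq (m' m₁ m₂ : MeasurableSpace Ω)
    (hm' : m' ≤ mΩ) (hm₁ : m₁ ≤ mΩ) (hm₂ : m₂ ≤ mΩ) :
    CondIndep m' m₁ m₂ hm' μ ↔
      ∀ t, MeasurableSet[m₁] t → (μ⟦t | m' ⊔ m₂⟧) =ᵐ[μ] (μ⟦t | m'⟧) := by
  have hsup : m' ⊔ m₂ ≤ mΩ := sup_le hm' hm₂
  letI m0 : MeasurableSpace Ω := mΩ
  rw [condIndep_iff m' m₁ m₂ hm' hm₁ hm₂ μ]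
  constructor
  · -- forward
    intro h t ht
    have htΩ : MeasurableSet[mΩ] t := hm₁ t ht
    set P : Set (Set Ω) :=
      {u | ∃ a b, MeasurableSet[m'] a ∧ MeasurableSet[m₂] b ∧ u = a ∩ b} with hP
    have hPpi : IsPiSystem P := by
      rintro u ⟨a, b, ha, hb, rfl⟩ v ⟨c, d, hc, hd, rfl⟩ -
      exact ⟨a ∩ c, b ∩ d, ha.inter hc, hb.inter hd, Set.inter_inter_inter_comm a b c d⟩
    have hPgen : m' ⊔ m₂ = MeasurableSpace.generateFrom P := by
      refine le_antisymm (sup_le ?_ ?_) (MeasurableSpace.generateFrom_le ?_)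
      · exact fun s hs => measurableSet_generateFrom
          ⟨s, Set.univ, hs, @MeasurableSet.univ Ω m₂, (Set.inter_univ s).symm⟩
      · exact fun s hs => measurableSet_generateFrom
          ⟨Set.univ, s, @MeasurableSet.univ Ω m', hs, (Set.univ_inter s).symm⟩
      · rintro u ⟨a, b, ha, hb, rfl⟩
        exact ((le_sup_left : m' ≤ m' ⊔ m₂) a ha).inter
          ((le_sup_right : m₂ ≤ m' ⊔ m₂) b hb)
    have key : ∀ s, MeasurableSet[m' ⊔ m₂] s →
        ∫ x in s, (μ⟦t | m'⟧) x ∂μ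
          = ∫ x in s, Set.indicator t (fun _ => (1:ℝ)) x ∂μ := by
      refine @MeasurableSpace.induction_on_inter Ω (m' ⊔ m₂)
        (fun s _ => ∫ x in s, (μ⟦t | m'⟧) x ∂μ
          = ∫ x in s, Set.indicator t (fun _ => (1:ℝ)) x ∂μ) P
        hPgen hPpi (by simp) ?_ ?_ ?_
      · -- basic
        rintro u ⟨a, b, ha, hb, rfl⟩
        have haΩ : MeasurableSet[mΩ] a := hm' a ha
        have hbΩ : MeasurableSet[mΩ] b := hm₂ b hb
        have hib : Integrable (Set.indicator b fun _ => (1:ℝ)) μ := integrable_indicator_one hbΩ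
        -- LHS
        have l1 : ∫ x in a ∩ b, (μ⟦t | m'⟧) x ∂μ
            = ∫ x in a, Set.indicator b (fun x => (μ⟦t | m'⟧) x) x ∂μ :=
          (setIntegral_indicator hbΩ).symm
        have hbdd0 : ∀ᵐ x ∂μ, |Set.indicator t (fun _ => (1:ℝ)) x| ≤ ((1 : ℝ≥0) : ℝ) :=
          Filter.Eventually.of_forall fun x => by
            by_cases hx : x ∈ t <;>
              simp [Set.indicator_of_mem, Set.indicator_of_notMem, hx]
        have hbdd : ∀ᵐ x ∂μ, ‖(μ⟦t | m'⟧) x‖ ≤ ((1 : ℝ≥0) : ℝ) := by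
          filter_upwards [ae_bdd_condExp_of_ae_bdd (R := 1) hbdd0] with x hx
          simpa [Real.norm_eq_abs] using hx
        have hprod : Integrable (fun x => (μ⟦t | m'⟧) x * Set.indicator b (fun _ => (1:ℝ)) x) μ :=
          hib.bdd_mul (c := ((1 : ℝ≥0) : ℝ))
            (stronglyMeasurable_condExp.mono hm').aestronglyMeasurable hbdd
        have l2 : ∫ x in a, Set.indicator b (fun x => (μ⟦t | m'⟧) x) x ∂μ
            = ∫ x in a, (fun x => (μ⟦t | m'⟧) x * Set.indicator b (fun _ => (1:ℝ)) x) x ∂μ := by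
          refine setIntegral_congr_ae haΩ (Filter.Eventually.of_forall fun x _ => ?_)
          by_cases hx : x ∈ b <;>
            simp [Set.indicator_of_mem, Set.indicator_of_notMem, hx]
        have l3 : ∫ x in a, (fun x => (μ⟦t | m'⟧) x * Set.indicator b (fun _ => (1:ℝ)) x) x ∂μ
            = ∫ x in a, (μ[fun x => (μ⟦t | m'⟧) x * Set.indicator b (fun _ => (1:ℝ)) x | m']) x ∂μ :=
          (setIntegral_condExp hm' hprod ha).symm
        have l4 : (μ[fun x => (μ⟦t | m'⟧) x * Set.indicator b (fun _ => (1:ℝ)) x | m'])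
            =ᵐ[μ] fun x => (μ⟦t | m'⟧) x * (μ⟦b | m'⟧) x := by
          have := condExp_mul_of_stronglyMeasurable_left (m := m') (μ := μ)
            (f := fun x => (μ⟦t | m'⟧) x) (g := Set.indicator b fun _ => (1:ℝ))
            stronglyMeasurable_condExp hprod hib
          filter_upwards [this] with x hx
          exact hx
        -- RHS
        have r1 : ∫ x in a ∩ b, Set.indicator t (fun _ => (1:ℝ)) x ∂μ
            = ∫ x in a, Set.indicator (b ∩ t) (fun _ => (1:ℝ)) x ∂μ := by
          rw [← Set.indicator_indicator, setIntegral_indicator hbΩ]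
        have r2 : ∫ x in a, Set.indicator (b ∩ t) (fun _ => (1:ℝ)) x ∂μ
            = ∫ x in a, (μ⟦b ∩ t | m'⟧) x ∂μ :=
          (setIntegral_condExp hm' (integrable_indicator_one (hbΩ.inter htΩ)) ha).symm
        have r3 : (μ⟦b ∩ t | m'⟧) =ᵐ[μ] fun x => (μ⟦t | m'⟧) x * (μ⟦b | m'⟧) x := by
          have h' := h t b ht hb
          have : (μ⟦b ∩ t | m'⟧) = (μ⟦t ∩ b | m'⟧) := by rw [Set.inter_comm]
          rw [this]
          filter_upwards [h'] with x hx
          simpa using hx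
        rw [l1, l2, l3, r1, r2]
        refine Eq.trans (setIntegral_congr_ae haΩ ?_)
          (Eq.symm (setIntegral_congr_ae (f := μ⟦b ∩ t | m'⟧)
            (g := fun x => (μ⟦t | m'⟧) x * (μ⟦b | m'⟧) x) haΩ ?_))
        · filter_upwards [l4] with x hx using fun _ => hx
        · filter_upwards [r3] with x hx using fun _ => hx
      · -- compl
        intro u hu hC
        have huΩ : MeasurableSet[mΩ] u := hsup u hu
        have h1 : Integrable (μ⟦t | m'⟧) μ := integrable_condExp
        have h2 : Integrable (Set.indicator t fun _ => (1:ℝ)) μ := integrable_indicator_one htΩ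
        have tot : ∫ x, (μ⟦t | m'⟧) x ∂μ = ∫ x, Set.indicator t (fun _ => (1:ℝ)) x ∂μ :=
          integral_condExp hm'
        have e1 := integral_add_compl huΩ h1
        have e2 := integral_add_compl huΩ h2
        linarith
      · -- disjoint union
        intro f hdisj hfm hC
        have hfΩ : ∀ i, MeasurableSet[mΩ] (f i) := fun i => hsup _ (hfm i)
        rw [integral_iUnion hfΩ hdisj integrable_condExp.integrableOn,
          integral_iUnion hfΩ hdisj (integrable_indicator_one htΩ).integrableOn]
        exact tsum_congr hC
    refine (ae_eq_condExp_of_forall_setIntegral_eq hsup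
      (integrable_indicator_one htΩ) (fun s _ _ => integrable_condExp.integrableOn)
      (fun s hs _ => key s hs)
      (StronglyMeasurable.aestronglyMeasurable (μ := μ)
        ((stronglyMeasurable_condExp (m := m') (μ := μ)).mono le_sup_left))).symm
  · -- backward
    intro h t1 t2 ht1 ht2
    have ht1Ω : MeasurableSet[mΩ] t1 := hm₁ t1 ht1
    have ht2Ω : MeasurableSet[mΩ] t2 := hm₂ t2 ht2
    set f : Ω → ℝ := Set.indicator t1 fun _ => (1:ℝ) with hf
    set g : Ω → ℝ := Set.indicator t2 fun _ => (1:ℝ) with hg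
    have hfint : Integrable f μ := integrable_indicator_one ht1Ω
    have hgint : Integrable g μ := integrable_indicator_one ht2Ω
    have hgsm : StronglyMeasurable[m' ⊔ m₂] g :=
      (stronglyMeasurable_const.indicator ((le_sup_right : m₂ ≤ m' ⊔ m₂) t2 ht2))
    have hfg : Integrable (g * f) μ := by
      have := hfint.bdd_mul (c := 1) (hgsm.mono hsup).aestronglyMeasurable
        (norm_indicator_one_le t2)
      exact this
    have hind : Set.indicator (t1 ∩ t2) (fun _ => (1:ℝ)) = g * f := by
      funext x
      by_cases h1 : x ∈ t1 <;> by_cases h2 : x ∈ t2 <;>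
        simp [hf, hg, Set.indicator_of_mem, Set.indicator_of_notMem, h1, h2, Set.mem_inter_iff]
    have step1 : (μ⟦t1 ∩ t2 | m'⟧) = μ[g * f | m'] := by rw [hind]
    have step2 : μ[g * f | m'] =ᵐ[μ] μ[(μ[g * f | m' ⊔ m₂]) | m'] :=
      (condExp_condExp_of_le le_sup_left hsup).symm
    have pull1 : μ[g * f | m' ⊔ m₂] =ᵐ[μ] g * μ[f | m' ⊔ m₂] :=
      condExp_mul_of_stronglyMeasurable_left hgsm hfg hfint
    have hch : μ[f | m' ⊔ m₂] =ᵐ[μ] μ[f | m'] := h t1 ht1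
    have pull1' : μ[g * f | m' ⊔ m₂] =ᵐ[μ] g * μ[f | m'] :=
      pull1.trans (Filter.EventuallyEq.mul Filter.EventuallyEq.rfl hch)
    have step3 : μ[(μ[g * f | m' ⊔ m₂]) | m'] =ᵐ[μ] μ[g * μ[f | m'] | m'] :=
      condExp_congr_ae pull1'
    have hbdd0 : ∀ᵐ x ∂μ, |f x| ≤ ((1 : ℝ≥0) : ℝ) :=
      Filter.Eventually.of_forall fun x => by
        by_cases hx : x ∈ t1 <;>
          simp [hf, Set.indicator_of_mem, Set.indicator_of_notMem, hx]
    have hbdd : ∀ᵐ x ∂μ, ‖(μ[f | m']) x‖ ≤ ((1 : ℝ≥0) : ℝ) := by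
      filter_upwards [ae_bdd_condExp_of_ae_bdd (R := 1) hbdd0] with x hx
      simpa [Real.norm_eq_abs] using hx
    have hfgm : Integrable (μ[f | m'] * g) μ :=
      hgint.bdd_mul (c := ((1 : ℝ≥0) : ℝ))
        (stronglyMeasurable_condExp.mono hm').aestronglyMeasurable hbdd
    have pull2 : μ[μ[f | m'] * g | m'] =ᵐ[μ] μ[f | m'] * μ[g | m'] :=
      condExp_mul_of_stronglyMeasurable_left stronglyMeasurable_condExp hfgm hgint
    have step4 : μ[g * μ[f | m'] | m'] =ᵐ[μ] μ[f | m'] * μ[g | m'] := by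
      rw [mul_comm]; exact pull2
    calc (μ⟦t1 ∩ t2 | m'⟧) = μ[g * f | m'] := step1
      _ =ᵐ[μ] μ[(μ[g * f | m' ⊔ m₂]) | m'] := step2
      _ =ᵐ[μ] μ[g * μ[f | m'] | m'] := step3
      _ =ᵐ[μ] μ[f | m'] * μ[g | m'] := step4

end RDFAux

namespace RDFAux

section Congr

variable {Ω : Type*} {mΩ : MeasurableSpace Ω} [StandardBorelSpace Ω]
  {μ : Measure Ω} [IsFiniteMeasure μ]

lemma condIndep_congr {m' m'' m₁ m₁' m₂ m₂' : MeasurableSpace Ω}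
    (h' : m' = m'') (h₁ : m₁ = m₁') (h₂ : m₂ = m₂')
    (hm' : m' ≤ mΩ) (hm'' : m'' ≤ mΩ) :
    CondIndep m' m₁ m₂ hm' μ ↔ CondIndep m'' m₁' m₂' hm'' μ := by
  subst h'; subst h₁; subst h₂; rfl

lemma condIndep_symm_iff {m' m₁ m₂ : MeasurableSpace Ω} (hm' : m' ≤ mΩ) :
    CondIndep m' m₁ m₂ hm' μ ↔ CondIndep m' m₂ m₁ hm' μ :=
  ⟨CondIndep.symm, CondIndep.symm⟩

end Congr

lemma comap_pi_bundle {Ω : Type*} [MeasurableSpace Ω] {ι : Type*} {π : ι → Type*}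
    [∀ i, MeasurableSpace (π i)] (f : ∀ i, Ω → π i) :
    MeasurableSpace.comap (fun ω => fun i => f i ω) MeasurableSpace.pi
      = ⨆ i, MeasurableSpace.comap (f i) inferInstance := by
  rw [show (MeasurableSpace.pi : MeasurableSpace (∀ i, π i))
      = ⨆ i, MeasurableSpace.comap (fun g => g i) inferInstance from rfl,
    MeasurableSpace.comap_iSup]
  exact iSup_congr fun i => by rw [MeasurableSpace.comap_comp]; rfl

lemma comap_prod_bundle {Ω β γ : Type*} [MeasurableSpace Ω] [mβ : MeasurableSpace β]
    [mγ : MeasurableSpace γ] (f : Ω → β) (g : Ω → γ) :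
    MeasurableSpace.comap (fun ω => (f ω, g ω)) inferInstance
      = MeasurableSpace.comap f mβ ⊔ MeasurableSpace.comap g mγ := by
  rw [show (inferInstance : MeasurableSpace (β × γ))
      = mβ.comap Prod.fst ⊔ mγ.comap Prod.snd from rfl,
    MeasurableSpace.comap_sup, MeasurableSpace.comap_comp, MeasurableSpace.comap_comp]
  rfl

section Spaces

variable {n : ℕ} (𝒳 𝒴 : Fin (n + 1) → Type*)
  [∀ j, MeasurableSpace (𝒳 j)] [∀ j, MeasurableSpace (𝒴 j)]

abbrev Om := (((j : Fin (n + 1)) → 𝒳 j) × ((j : Fin (n + 1)) → 𝒴 j))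

def mX (k : Fin (n + 1)) : MeasurableSpace (Om 𝒳 𝒴) :=
  MeasurableSpace.comap (fun ω : Om 𝒳 𝒴 => ω.1 k) inferInstance

def mY (k : Fin (n + 1)) : MeasurableSpace (Om 𝒳 𝒴) :=
  MeasurableSpace.comap (fun ω : Om 𝒳 𝒴 => ω.2 k) inferInstance

def SXle (i : ℕ) : MeasurableSpace (Om 𝒳 𝒴) := ⨆ k : Fin (n + 1), ⨆ _ : (k : ℕ) ≤ i, mX 𝒳 𝒴 k

def SXgt (i : ℕ) : MeasurableSpace (Om 𝒳 𝒴) := ⨆ k : Fin (n + 1), ⨆ _ : i < (k : ℕ), mX 𝒳 𝒴 k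

def SYle (i : ℕ) : MeasurableSpace (Om 𝒳 𝒴) := ⨆ k : Fin (n + 1), ⨆ _ : (k : ℕ) ≤ i, mY 𝒳 𝒴 k

def SYlt (i : ℕ) : MeasurableSpace (Om 𝒳 𝒴) := ⨆ k : Fin (n + 1), ⨆ _ : (k : ℕ) < i, mY 𝒳 𝒴 k

lemma mX_le (k : Fin (n + 1)) : mX 𝒳 𝒴 k ≤ (inferInstance : MeasurableSpace (Om 𝒳 𝒴)) :=
  ((measurable_pi_apply k).comp measurable_fst).comap_le

lemma mY_le (k : Fin (n + 1)) : mY 𝒳 𝒴 k ≤ (inferInstance : MeasurableSpace (Om 𝒳 𝒴)) :=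
  ((measurable_pi_apply k).comp measurable_snd).comap_le

lemma SXle_le (i : ℕ) : SXle 𝒳 𝒴 i ≤ (inferInstance : MeasurableSpace (Om 𝒳 𝒴)) :=
  iSup_le fun k => iSup_le fun _ => mX_le 𝒳 𝒴 k

lemma SXgt_le (i : ℕ) : SXgt 𝒳 𝒴 i ≤ (inferInstance : MeasurableSpace (Om 𝒳 𝒴)) :=
  iSup_le fun k => iSup_le fun _ => mX_le 𝒳 𝒴 k

lemma SYle_le (i : ℕ) : SYle 𝒳 𝒴 i ≤ (inferInstance : MeasurableSpace (Om 𝒳 𝒴)) :=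
  iSup_le fun k => iSup_le fun _ => mY_le 𝒳 𝒴 k

lemma SYlt_le (i : ℕ) : SYlt 𝒳 𝒴 i ≤ (inferInstance : MeasurableSpace (Om 𝒳 𝒴)) :=
  iSup_le fun k => iSup_le fun _ => mY_le 𝒳 𝒴 k

lemma comap_Xle (i : ℕ) (h : i + 1 ≤ n + 1) :
    MeasurableSpace.comap
      (fun ω : Om 𝒳 𝒴 => fun j : Fin (i + 1) => ω.1 (Fin.castLE h j)) inferInstance
      = SXle 𝒳 𝒴 i := by
  rw [show (fun ω : Om 𝒳 𝒴 => fun j : Fin (i + 1) => ω.1 (Fin.castLE h j))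
      = (fun ω : Om 𝒳 𝒴 => fun j : Fin (i + 1) =>
          (fun j' : Fin (i + 1) => fun ω' : Om 𝒳 𝒴 => ω'.1 (Fin.castLE h j')) j ω) from rfl,
    comap_pi_bundle]
  apply le_antisymm
  · exact iSup_le fun j => le_iSup_of_le (Fin.castLE h j)
      (le_iSup_of_le (by simpa using Nat.lt_succ_iff.mp j.isLt) le_rfl)
  · refine iSup_le fun k => iSup_le fun hk => le_iSup_of_le ⟨(k : ℕ), by omega⟩ ?_
    exact le_of_eq (congrArg (mX 𝒳 𝒴) (by ext; simp)).symm

lemma comap_Ylt (i : ℕ) (h : i ≤ n + 1) :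
    MeasurableSpace.comap
      (fun ω : Om 𝒳 𝒴 => fun j : Fin i => ω.2 (Fin.castLE h j)) inferInstance
      = SYlt 𝒳 𝒴 i := by
  rw [show (fun ω : Om 𝒳 𝒴 => fun j : Fin i => ω.2 (Fin.castLE h j))
      = (fun ω : Om 𝒳 𝒴 => fun j : Fin i =>
          (fun j' : Fin i => fun ω' : Om 𝒳 𝒴 => ω'.2 (Fin.castLE h j')) j ω) from rfl,
    comap_pi_bundle]
  apply le_antisymm
  · exact iSup_le fun j => le_iSup_of_le (Fin.castLE h j)
      (le_iSup_of_le (by simpa using j.isLt) le_rfl)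
  · refine iSup_le fun k => iSup_le fun hk => le_iSup_of_le ⟨(k : ℕ), by omega⟩ ?_
    exact le_of_eq (congrArg (mY 𝒳 𝒴) (by ext; simp)).symm

lemma comap_Yle (i : ℕ) (h : i + 1 ≤ n + 1) :
    MeasurableSpace.comap
      (fun ω : Om 𝒳 𝒴 => fun j : Fin (i + 1) => ω.2 (Fin.castLE h j)) inferInstance
      = SYle 𝒳 𝒴 i := by
  rw [show (fun ω : Om 𝒳 𝒴 => fun j : Fin (i + 1) => ω.2 (Fin.castLE h j))
      = (fun ω : Om 𝒳 𝒴 => fun j : Fin (i + 1) =>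
          (fun j' : Fin (i + 1) => fun ω' : Om 𝒳 𝒴 => ω'.2 (Fin.castLE h j')) j ω) from rfl,
    comap_pi_bundle]
  apply le_antisymm
  · exact iSup_le fun j => le_iSup_of_le (Fin.castLE h j)
      (le_iSup_of_le (by simpa using Nat.lt_succ_iff.mp j.isLt) le_rfl)
  · refine iSup_le fun k => iSup_le fun hk => le_iSup_of_le ⟨(k : ℕ), by omega⟩ ?_
    exact le_of_eq (congrArg (mY 𝒳 𝒴) (by ext; simp)).symm

lemma comap_Xgt (i : ℕ) (hi : i < n)
    (hpf : ∀ j : Fin (n - i), i + 1 + (j : ℕ) < n + 1) :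
    MeasurableSpace.comap
      (fun ω : Om 𝒳 𝒴 => fun j : Fin (n - i) => ω.1 ⟨i + 1 + (j : ℕ), hpf j⟩) inferInstance
      = SXgt 𝒳 𝒴 i := by
  rw [show (fun ω : Om 𝒳 𝒴 => fun j : Fin (n - i) => ω.1 ⟨i + 1 + (j : ℕ), hpf j⟩)
      = (fun ω : Om 𝒳 𝒴 => fun j : Fin (n - i) =>
          (fun j' : Fin (n - i) => fun ω' : Om 𝒳 𝒴 => ω'.1 ⟨i + 1 + (j' : ℕ), hpf j'⟩) j ω)
        from rfl,
    comap_pi_bundle]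
  apply le_antisymm
  · exact iSup_le fun j => le_iSup_of_le ⟨i + 1 + (j : ℕ), hpf j⟩
      (le_iSup_of_le (by simp; omega) le_rfl)
  · refine iSup_le fun k => iSup_le fun hk => le_iSup_of_le ⟨(k : ℕ) - (i + 1), by omega⟩ ?_
    exact le_of_eq (congrArg (mX 𝒳 𝒴) (by ext; simp; omega)).symm

lemma comap_Yi (k : Fin (n + 1)) :
    MeasurableSpace.comap (fun ω : Om 𝒳 𝒴 => ω.2 k) inferInstance = mY 𝒳 𝒴 k := rfl

lemma SYlt_zero : SYlt 𝒳 𝒴 0 = ⊥ := by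
  simp [SYlt]

lemma SYlt_succ (j : ℕ) : SYlt 𝒳 𝒴 (j + 1) = SYle 𝒳 𝒴 j := by
  simp [SYlt, SYle, Nat.lt_succ_iff]

lemma SYlt_sup_mY (i : ℕ) (hi : i < n + 1) :
    SYlt 𝒳 𝒴 i ⊔ mY 𝒳 𝒴 ⟨i, hi⟩ = SYle 𝒳 𝒴 i := by
  apply le_antisymm
  · refine sup_le ?_ ?_
    · exact iSup_le fun k => iSup_le fun hk =>
        le_iSup_of_le k (le_iSup_of_le (le_of_lt hk) le_rfl)
    · exact le_iSup_of_le ⟨i, hi⟩ (le_iSup_of_le (by simp) le_rfl)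
  · refine iSup_le fun k => iSup_le fun hk => ?_
    rcases lt_or_eq_of_le hk with h | h
    · exact le_sup_of_le_left (le_iSup_of_le k (le_iSup_of_le h le_rfl))
    · refine le_sup_of_le_right (le_of_eq (congrArg (mY 𝒳 𝒴) ?_))
      ext; simp [h]

lemma SXle_sup_SXgt (i : ℕ) : SXle 𝒳 𝒴 i ⊔ SXgt 𝒳 𝒴 i = ⨆ k, mX 𝒳 𝒴 k := by
  apply le_antisymm
  · exact sup_le (iSup_le fun k => iSup_le fun _ => le_iSup _ k)
      (iSup_le fun k => iSup_le fun _ => le_iSup _ k)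
  · refine iSup_le fun k => ?_
    rcases le_or_gt (k : ℕ) i with h | h
    · exact le_sup_of_le_left (le_iSup_of_le k (le_iSup_of_le h le_rfl))
    · exact le_sup_of_le_right (le_iSup_of_le k (le_iSup_of_le h le_rfl))

lemma SXle_mono {i i' : ℕ} (h : i ≤ i') : SXle 𝒳 𝒴 i ≤ SXle 𝒳 𝒴 i' :=
  iSup_le fun k => iSup_le fun hk => le_iSup_of_le k (le_iSup_of_le (hk.trans h) le_rfl)

lemma SYlt_le_SYle (i : ℕ) : SYlt 𝒳 𝒴 i ≤ SYle 𝒳 𝒴 i :=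
  iSup_le fun k => iSup_le fun hk => le_iSup_of_le k (le_iSup_of_le (le_of_lt hk) le_rfl)

end Spaces

end RDFAux

namespace RDFAux

lemma key {n : ℕ} (𝒳 𝒴 : Fin (n + 1) → Type*)
    [∀ j, MeasurableSpace (𝒳 j)] [∀ j, StandardBorelSpace (𝒳 j)] [∀ j, Nonempty (𝒳 j)]
    [∀ j, MeasurableSpace (𝒴 j)] [∀ j, StandardBorelSpace (𝒴 j)] [∀ j, Nonempty (𝒴 j)]
    (μ : Measure (((j : Fin (n + 1)) → 𝒳 j) × ((j : Fin (n + 1)) → 𝒴 j)))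
    [IsProbabilityMeasure μ] :
    (∀ i : ℕ, ∀ hi : i < n,
          CondIndepFun
            (MeasurableSpace.comap
              (fun ω : ((j : Fin (n + 1)) → 𝒳 j) × ((j : Fin (n + 1)) → 𝒴 j) =>
                ((fun j : Fin (i + 1) => ω.1 (Fin.castLE (by have := hi; omega) j)),
                 (fun j : Fin i => ω.2 (Fin.castLE (by have := hi; omega) j)))) inferInstance)
            ((Measurable.prodMk
                (measurable_pi_lambda _ fun j : Fin (i + 1) =>
                  (measurable_pi_apply _).comp measurable_fst)
                (measurable_pi_lambda _ fun j : Fin i =>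
                  (measurable_pi_apply _).comp measurable_snd)).comap_le)
            (fun ω => ω.2 ⟨i, by have := hi; omega⟩)
            (fun ω => fun j : Fin (n - i) => ω.1 ⟨i + 1 + j.1, by have := j.isLt; grind⟩)
            μ) ↔
    (∀ i : ℕ, ∀ hi : i < n,
          CondIndepFun
            (MeasurableSpace.comap
              (fun ω : ((j : Fin (n + 1)) → 𝒳 j) × ((j : Fin (n + 1)) → 𝒴 j) =>
                fun j : Fin (i + 1) => ω.1 (Fin.castLE (by have := hi; omega) j)) inferInstance)
            ((measurable_pi_lambda _ fun j : Fin (i + 1) =>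
                (measurable_pi_apply _).comp measurable_fst).comap_le)
            (fun ω => fun j : Fin (n - i) => ω.1 ⟨i + 1 + j.1, by have := j.isLt; grind⟩)
            (fun ω => fun j : Fin (i + 1) => ω.2 (Fin.castLE (by have := hi; omega) j))
            μ) := by
  have naEquiv : ∀ i : ℕ, ∀ hi : i < n,
      (CondIndepFun
            (MeasurableSpace.comap
              (fun ω : ((j : Fin (n + 1)) → 𝒳 j) × ((j : Fin (n + 1)) → 𝒴 j) =>
                ((fun j : Fin (i + 1) => ω.1 (Fin.castLE (by omega) j)),
                 (fun j : Fin i => ω.2 (Fin.castLE (by omega) j)))) inferInstance)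
            ((Measurable.prodMk
                (measurable_pi_lambda _ fun j : Fin (i + 1) =>
                  (measurable_pi_apply _).comp measurable_fst)
                (measurable_pi_lambda _ fun j : Fin i =>
                  (measurable_pi_apply _).comp measurable_snd)).comap_le)
            (fun ω => ω.2 ⟨i, by omega⟩)
            (fun ω => fun j : Fin (n - i) => ω.1 ⟨i + 1 + j.1, by have := j.isLt; omega⟩)
            μ) ↔
      (∀ t, MeasurableSet[SXgt 𝒳 𝒴 i] t →
        (μ⟦t | SXle 𝒳 𝒴 i ⊔ SYle 𝒳 𝒴 i⟧) =ᵐ[μ] (μ⟦t | SXle 𝒳 𝒴 i ⊔ SYlt 𝒳 𝒴 i⟧)) := by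
    intro i hi
    have hsup' : SXle 𝒳 𝒴 i ⊔ SYlt 𝒳 𝒴 i
        ≤ (inferInstance : MeasurableSpace (Om 𝒳 𝒴)) :=
      sup_le (SXle_le 𝒳 𝒴 i) (SYlt_le 𝒳 𝒴 i)
    rw [condIndepFun_iff_condIndep,
      condIndep_congr (μ := μ)
        (by rw [comap_prod_bundle, comap_Xle 𝒳 𝒴 i (by omega), comap_Ylt 𝒳 𝒴 i (by omega)])
        (comap_Yi 𝒳 𝒴 ⟨i, by omega⟩)
        (comap_Xgt 𝒳 𝒴 i hi fun j => by have := j.isLt; omega) _ hsup',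
      condIndep_symm_iff,
      condIndep_iff_condexp_sup_eq _ _ _ hsup' (SXgt_le 𝒳 𝒴 i) (mY_le 𝒳 𝒴 ⟨i, by omega⟩),
      sup_assoc, SYlt_sup_mY 𝒳 𝒴 i (by omega)]
  have eEquiv : ∀ i : ℕ, ∀ hi : i < n,
      (CondIndepFun
            (MeasurableSpace.comap
              (fun ω : ((j : Fin (n + 1)) → 𝒳 j) × ((j : Fin (n + 1)) → 𝒴 j) =>
                fun j : Fin (i + 1) => ω.1 (Fin.castLE (by omega) j)) inferInstance)
            ((measurable_pi_lambda _ fun j : Fin (i + 1) =>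
                (measurable_pi_apply _).comp measurable_fst).comap_le)
            (fun ω => fun j : Fin (n - i) => ω.1 ⟨i + 1 + j.1, by have := j.isLt; omega⟩)
            (fun ω => fun j : Fin (i + 1) => ω.2 (Fin.castLE (by omega) j))
            μ) ↔
      (∀ t, MeasurableSet[SXgt 𝒳 𝒴 i] t →
        (μ⟦t | SXle 𝒳 𝒴 i ⊔ SYle 𝒳 𝒴 i⟧) =ᵐ[μ] (μ⟦t | SXle 𝒳 𝒴 i⟧)) := by
    intro i hi
    rw [condIndepFun_iff_condIndep,
      condIndep_congr (μ := μ) (comap_Xle 𝒳 𝒴 i (by omega))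
        (comap_Xgt 𝒳 𝒴 i hi fun j => by have := j.isLt; omega)
        (comap_Yle 𝒳 𝒴 i (by omega)) _ (SXle_le 𝒳 𝒴 i),
      condIndep_iff_condexp_sup_eq _ _ _ (SXle_le 𝒳 𝒴 i) (SXgt_le 𝒳 𝒴 i) (SYle_le 𝒳 𝒴 i)]
  constructor
  · intro hna
    have hna' : ∀ i : ℕ, ∀ hi : i < n, ∀ t, MeasurableSet[SXgt 𝒳 𝒴 i] t →
        (μ⟦t | SXle 𝒳 𝒴 i ⊔ SYle 𝒳 𝒴 i⟧) =ᵐ[μ] (μ⟦t | SXle 𝒳 𝒴 i ⊔ SYlt 𝒳 𝒴 i⟧) :=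
      fun i hi => (naEquiv i hi).mp (hna i hi)
    have claim : ∀ i : ℕ, ∀ hi : i < n, ∀ t, MeasurableSet[SXgt 𝒳 𝒴 i] t →
        (μ⟦t | SXle 𝒳 𝒴 i ⊔ SYle 𝒳 𝒴 i⟧) =ᵐ[μ] (μ⟦t | SXle 𝒳 𝒴 i⟧) := by
      intro i
      induction i with
      | zero =>
        intro hi t ht
        have h := hna' 0 hi t ht
        rwa [SYlt_zero, sup_bot_eq] at h
      | succ j ihj =>
        intro hi t ht
        have hj : j < n := by omega
        have ej : CondIndep (SXle 𝒳 𝒴 j) (SXgt 𝒳 𝒴 j) (SYle 𝒳 𝒴 j) (SXle_le 𝒳 𝒴 j) μ := by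
          rw [condIndep_iff_condexp_sup_eq _ _ _ (SXle_le 𝒳 𝒴 j) (SXgt_le 𝒳 𝒴 j)
            (SYle_le 𝒳 𝒴 j)]
          exact ihj hj
        have ej' := (condIndep_symm_iff (μ := μ) (SXle_le 𝒳 𝒴 j)).mp ej
        rw [condIndep_iff_condexp_sup_eq _ _ _ (SXle_le 𝒳 𝒴 j) (SYle_le 𝒳 𝒴 j)
          (SXgt_le 𝒳 𝒴 j)] at ej'
        have hbig : SXle 𝒳 𝒴 (j + 1) ⊔ SXgt 𝒳 𝒴 (j + 1) = SXle 𝒳 𝒴 j ⊔ SXgt 𝒳 𝒴 j := by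
          rw [SXle_sup_SXgt, SXle_sup_SXgt]
        have step : ∀ s, MeasurableSet[SYle 𝒳 𝒴 j] s →
            (μ⟦s | SXle 𝒳 𝒴 (j + 1) ⊔ SXgt 𝒳 𝒴 (j + 1)⟧)
              =ᵐ[μ] (μ⟦s | SXle 𝒳 𝒴 (j + 1)⟧) := by
          intro s hs
          have h1 := ej' s hs
          have hmid : (μ⟦s | SXle 𝒳 𝒴 (j + 1)⟧) =ᵐ[μ] (μ⟦s | SXle 𝒳 𝒴 j⟧) :=
            condexp_sandwich (SXle_mono 𝒳 𝒴 (by omega))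
              (le_sup_left.trans (le_of_eq hbig))
              (sup_le (SXle_le 𝒳 𝒴 j) (SXgt_le 𝒳 𝒴 j)) h1
          calc (μ⟦s | SXle 𝒳 𝒴 (j + 1) ⊔ SXgt 𝒳 𝒴 (j + 1)⟧)
              = (μ⟦s | SXle 𝒳 𝒴 j ⊔ SXgt 𝒳 𝒴 j⟧) := by rw [hbig]
            _ =ᵐ[μ] (μ⟦s | SXle 𝒳 𝒴 j⟧) := h1
            _ =ᵐ[μ] (μ⟦s | SXle 𝒳 𝒴 (j + 1)⟧) := hmid.symm
        have ci : CondIndep (SXle 𝒳 𝒴 (j + 1)) (SYle 𝒳 𝒴 j) (SXgt 𝒳 𝒴 (j + 1))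
            (SXle_le 𝒳 𝒴 (j + 1)) μ := by
          rw [condIndep_iff_condexp_sup_eq _ _ _ (SXle_le 𝒳 𝒴 (j + 1)) (SYle_le 𝒳 𝒴 j)
            (SXgt_le 𝒳 𝒴 (j + 1))]
          exact step
        have ci' := (condIndep_symm_iff (μ := μ) (SXle_le 𝒳 𝒴 (j + 1))).mp ci
        rw [condIndep_iff_condexp_sup_eq _ _ _ (SXle_le 𝒳 𝒴 (j + 1)) (SXgt_le 𝒳 𝒴 (j + 1))
          (SYle_le 𝒳 𝒴 j)] at ci'
        have h2 := ci' t ht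
        have h3 := hna' (j + 1) hi t ht
        rw [SYlt_succ] at h3
        exact h3.trans h2
    intro i hi
    rw [eEquiv i hi]
    exact claim i hi
  · intro he i hi
    rw [naEquiv i hi]
    intro t ht
    have h1 := (eEquiv i hi).mp (he i hi) t ht
    have hmid : (μ⟦t | SXle 𝒳 𝒴 i ⊔ SYlt 𝒳 𝒴 i⟧) =ᵐ[μ] (μ⟦t | SXle 𝒳 𝒴 i⟧) :=
      condexp_sandwich le_sup_left
        (sup_le le_sup_left ((SYlt_le_SYle 𝒳 𝒴 i).trans le_sup_right))
        (sup_le (SXle_le 𝒳 𝒴 i) (SYle_le 𝒳 𝒴 i)) h1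
    exact h1.trans hmid.symm

end RDFAux


/-- Kullback–Leibler divergence of `μ` from `ν`: `∫ log(dμ/dν) dμ` when `μ ≪ ν` and the
log-likelihood ratio is `μ`-integrable, and `∞` otherwise. -/
noncomputable def klDivergence {α : Type*} [MeasurableSpace α] (μ ν : Measure α) : ℝ≥0∞ :=
  if μ ≪ ν ∧ Integrable (llr μ ν) μ then ENNReal.ofReal (∫ x, llr μ ν x ∂μ) else ∞

/-- Mutual information `I(X^n; Y^n)` of a joint measure on a product space: the KL divergence
of the joint measure from the product of its two marginals. -/
noncomputable def mutualInfoProd {α β : Type*} [MeasurableSpace α] [MeasurableSpace β]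
    (μ : Measure (α × β)) : ℝ≥0∞ :=
  klDivergence μ ((μ.map Prod.fst).prod (μ.map Prod.snd))

/-- **Equivalence of the information nonanticipative RDF and the nonanticipatory ε-entropy**
(Theorem 4): the set `𝒬na(D)` of joint measures with source marginal `P`, average distortion
at most `D`, and causal constraint `Y_i ⫫ (X_{i+1},…,X_n) | (X^i, Y^{i-1})` for all `i < n`,
coincides with the set `𝒬ε(D)` where the constraint is replaced by the Markov-chain constraint
`(X_{i+1},…,X_n) ⫫ (Y_0,…,Y_i) | (X_0,…,X_i)` for all `i < n`; consequently
`R^{na}_{0,n}(D) = R^{ε}_{0,n}(D)`. -/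
theorem nonanticipativeRDF_eq_nonanticipatory_epsilon_entropy
    {n : ℕ} (𝒳 𝒴 : Fin (n + 1) → Type*)
    [∀ j, MeasurableSpace (𝒳 j)] [∀ j, StandardBorelSpace (𝒳 j)] [∀ j, Nonempty (𝒳 j)]
    [∀ j, MeasurableSpace (𝒴 j)] [∀ j, StandardBorelSpace (𝒴 j)] [∀ j, Nonempty (𝒴 j)]
    (Psrc : Measure ((j : Fin (n + 1)) → 𝒳 j)) [IsProbabilityMeasure Psrc]
    (d : (((j : Fin (n + 1)) → 𝒳 j) × ((j : Fin (n + 1)) → 𝒴 j)) → ℝ≥0∞)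
    (hd : Measurable d) (D : ℝ) (hD : 0 ≤ D)
    (Qna Qe : Set (ProbabilityMeasure
      (((j : Fin (n + 1)) → 𝒳 j) × ((j : Fin (n + 1)) → 𝒴 j))))
    -- `𝒬na(D)` : fixed source marginal, average distortion at most `D`, and
    -- `Y_i ⫫ (X_{i+1},…,X_n) | (X^i, Y^{i-1})` for all `i < n`.
    (hQna : Qna = {μ | μ.toMeasure.map Prod.fst = Psrc ∧
        (∫⁻ z, d z ∂μ.toMeasure) ≤ ENNReal.ofReal ((n + 1) * D) ∧
        ∀ i : ℕ, ∀ hi : i < n,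
          CondIndepFun
            (MeasurableSpace.comap
              (fun ω : ((j : Fin (n + 1)) → 𝒳 j) × ((j : Fin (n + 1)) → 𝒴 j) =>
                ((fun j : Fin (i + 1) => ω.1 (Fin.castLE (by omega) j)),
                 (fun j : Fin i => ω.2 (Fin.castLE (by omega) j)))) inferInstance)
            ((Measurable.prodMk
                (measurable_pi_lambda _ fun j : Fin (i + 1) =>
                  (measurable_pi_apply _).comp measurable_fst)
                (measurable_pi_lambda _ fun j : Fin i =>
                  (measurable_pi_apply _).comp measurable_snd)).comap_le)
            (fun ω => ω.2 ⟨i, by omega⟩)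
            (fun ω => fun j : Fin (n - i) => ω.1 ⟨i + 1 + j.1, by have := j.isLt; omega⟩)
            μ.toMeasure})
    -- `𝒬ε(D)` : same marginal and distortion constraints, with the Markov-chain constraint
    -- `(X_{i+1},…,X_n) ⫫ (Y_0,…,Y_i) | (X_0,…,X_i)` for all `i < n`.
    (hQe : Qe = {μ | μ.toMeasure.map Prod.fst = Psrc ∧
        (∫⁻ z, d z ∂μ.toMeasure) ≤ ENNReal.ofReal ((n + 1) * D) ∧
        ∀ i : ℕ, ∀ hi : i < n,
          CondIndepFun
            (MeasurableSpace.comap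
              (fun ω : ((j : Fin (n + 1)) → 𝒳 j) × ((j : Fin (n + 1)) → 𝒴 j) =>
                fun j : Fin (i + 1) => ω.1 (Fin.castLE (by omega) j)) inferInstance)
            ((measurable_pi_lambda _ fun j : Fin (i + 1) =>
                (measurable_pi_apply _).comp measurable_fst).comap_le)
            (fun ω => fun j : Fin (n - i) => ω.1 ⟨i + 1 + j.1, by have := j.isLt; omega⟩)
            (fun ω => fun j : Fin (i + 1) => ω.2 (Fin.castLE (by omega) j))
            μ.toMeasure}) :
    Qna = Qe ∧
      (⨅ μ ∈ Qna, mutualInfoProd μ.toMeasure) =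
        ⨅ μ ∈ Qe, mutualInfoProd μ.toMeasure := by
  have hset : Qna = Qe := by
    rw [hQna, hQe]
    ext μ
    simp only [Set.mem_setOf_eq]
    refine and_congr Iff.rfl (and_congr Iff.rfl ?_)
    exact RDFAux.key 𝒳 𝒴 μ.toMeasure
  exact ⟨hset, by rw [hset]⟩
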